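/- Let n and k be positive integers with k dividing n, and consider the uniform marginals w = (1/n)𝟙ₙ ∈ ℝⁿ and v = (1/k)𝟙ₖ ∈ ℝᵏ. Then every extreme point X of the transportation polytope Π(w,v) has all entries in {0, 1/n}; equivalently, nX is a 0/1 matrix with exactly one 1 per row and with each column summing to n/k, so that up to the constant factor 1/n every extreme point is a partition matrix whose clusters all have cardinality n/k. -/

import Mathlib

open Finset Matrix

/-- The transportation polytope `Π(w, v)`: `n × k` real matrices with nonnegative
entries, row sums `w` and column sums `v`. -/
def transportPolytope {n k : ℕ} (w : Fin n → ℝ) (v : Fin k → ℝ) :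
    Set (Matrix (Fin n) (Fin k) ℝ) :=
  {X | (∀ i j, 0 ≤ X i j) ∧ (∀ i, ∑ j, X i j = w i) ∧ (∀ j, ∑ i, X i j = v j)}

/-- Core combinatorial lemma: if a nonempty edge set `S` in the bipartite graph
has minimum degree 2 on both sides, there is a nonzero matrix supported on `S`
with all row and column sums zero. -/
theorem exists_nonzero_zero_sums {n k : ℕ} (S : Finset (Fin n × Fin k))
    (hS : S.Nonempty)
    (hrow : ∀ p ∈ S, ∃ j' ≠ p.2, (p.1, j') ∈ S)
    (hcol : ∀ p ∈ S, ∃ i' ≠ p.1, (i', p.2) ∈ S) :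
    ∃ D : Matrix (Fin n) (Fin k) ℝ, D ≠ 0 ∧
      (∀ i j, (i, j) ∉ S → D i j = 0) ∧
      (∀ i, ∑ j, D i j = 0) ∧ (∀ j, ∑ i, D i j = 0) := by
  classical
  set A : Finset (Fin n) := S.image Prod.fst with hA
  set B : Finset (Fin k) := S.image Prod.snd with hB
  obtain ⟨p₀, hp₀⟩ := hS
  have hj₀ : p₀.2 ∈ B := Finset.mem_image_of_mem _ hp₀
  set B' : Finset (Fin k) := B.erase p₀.2 with hB'
  -- cardinality bounds
  have hSA : 2 * A.card ≤ S.card := by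
    have h1 : S.card = ∑ a ∈ A, (S.filter (fun p => p.1 = a)).card :=
      Finset.card_eq_sum_card_fiberwise (fun p hp => Finset.mem_image_of_mem _ hp)
    have h2 : ∀ a ∈ A, 2 ≤ (S.filter (fun p => p.1 = a)).card := by
      intro a ha
      obtain ⟨p, hp, hpa⟩ := Finset.mem_image.mp ha
      obtain ⟨j', hj', hpj'⟩ := hrow p hp
      refine Finset.one_lt_card.mpr ⟨(a, j'), ?_, (a, p.2), ?_, ?_⟩
      · simp [Finset.mem_filter, hpa ▸ hpj']
      · exact Finset.mem_filter.mpr ⟨by rw [← hpa]; simpa using hp, rfl⟩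
      · simp [hj']
    calc 2 * A.card = ∑ _a ∈ A, 2 := by simp [mul_comm]
      _ ≤ _ := Finset.sum_le_sum h2
      _ = S.card := h1.symm
  have hSB : 2 * B.card ≤ S.card := by
    have h1 : S.card = ∑ b ∈ B, (S.filter (fun p => p.2 = b)).card :=
      Finset.card_eq_sum_card_fiberwise (fun p hp => Finset.mem_image_of_mem _ hp)
    have h2 : ∀ b ∈ B, 2 ≤ (S.filter (fun p => p.2 = b)).card := by
      intro b hb
      obtain ⟨p, hp, hpb⟩ := Finset.mem_image.mp hb
      obtain ⟨i', hi', hpi'⟩ := hcol p hp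
      refine Finset.one_lt_card.mpr ⟨(i', b), ?_, (p.1, b), ?_, ?_⟩
      · simp [Finset.mem_filter, hpb ▸ hpi']
      · exact Finset.mem_filter.mpr ⟨by rw [← hpb]; simpa using hp, rfl⟩
      · simp [hi']
    calc 2 * B.card = ∑ _b ∈ B, 2 := by simp [mul_comm]
      _ ≤ _ := Finset.sum_le_sum h2
      _ = S.card := h1.symm
  have hcard : A.card + B'.card < S.card := by
    have hB'c : B'.card = B.card - 1 := Finset.card_erase_of_mem hj₀
    have hBpos : 1 ≤ B.card := Finset.card_pos.mpr ⟨_, hj₀⟩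
    omega
  -- the linear map sending an S-indexed vector to its row sums on A and column sums on B'
  let φ : (↥S → ℝ) →ₗ[ℝ] ((↥A → ℝ) × (↥B' → ℝ)) :=
    { toFun := fun x =>
        (fun a => ∑ p : ↥S, if (p : Fin n × Fin k).1 = (a : Fin n) then x p else 0,
         fun b => ∑ p : ↥S, if (p : Fin n × Fin k).2 = (b : Fin k) then x p else 0)
      map_add' := by
        intro x y
        refine Prod.ext ?_ ?_ <;> funext a <;>
          · show (∑ p : ↥S, (_ : ℝ)) = (∑ p : ↥S, (_ : ℝ)) + (∑ p : ↥S, (_ : ℝ))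
            rw [← Finset.sum_add_distrib]
            exact Finset.sum_congr rfl fun p _ => by split <;> simp
      map_smul' := by
        intro c x
        ext a <;> simp [Finset.mul_sum, mul_ite] }
  -- kernel is nontrivial by dimension count
  have hker : ∃ x : ↥S → ℝ, x ≠ 0 ∧ φ x = 0 := by
    have h1 : Module.finrank ℝ (↥S → ℝ) = S.card := by
      simp [Module.finrank_fintype_fun_eq_card]
    have h2 : Module.finrank ℝ ((↥A → ℝ) × (↥B' → ℝ)) = A.card + B'.card := by
      simp [Module.finrank_fintype_fun_eq_card]
    have hrn := LinearMap.finrank_range_add_finrank_ker φ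
    have hrange : Module.finrank ℝ (LinearMap.range φ) ≤ A.card + B'.card := by
      have := Submodule.finrank_le (LinearMap.range φ)
      omega
    have hkpos : 0 < Module.finrank ℝ (LinearMap.ker φ) := by omega
    have : LinearMap.ker φ ≠ ⊥ := by
      intro h
      rw [h, finrank_bot] at hkpos
      exact lt_irrefl 0 hkpos
    obtain ⟨x, hx, hx0⟩ := (Submodule.ne_bot_iff _).mp this
    exact ⟨x, hx0, hx⟩
  obtain ⟨x, hx0, hxker⟩ := hker
  -- the associated matrix
  set g : Fin n × Fin k → ℝ := fun q => if h : q ∈ S then x ⟨q, h⟩ else 0 with hg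
  have hxg : ∀ p : ↥S, x p = g (p : Fin n × Fin k) := by
    intro p; simp [hg, p.2]
  have key_row : ∀ i, ∑ j, g (i, j) = ∑ q ∈ S, (if q.1 = i then g q else 0) := by
    intro i
    rw [Finset.sum_subset (Finset.subset_univ S) (by
      intro q _ hq; split <;> simp [hg, hq])]
    rw [Fintype.sum_prod_type, Finset.sum_comm]
    simp
  have key_col : ∀ j, ∑ i, g (i, j) = ∑ q ∈ S, (if q.2 = j then g q else 0) := by
    intro j
    rw [Finset.sum_subset (Finset.subset_univ S) (by
      intro q _ hq; split <;> simp [hg, hq])]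
    rw [Fintype.sum_prod_type]
    simp
  have hrowsum : ∀ i, ∑ j, g (i, j) = 0 := by
    intro i
    rcases Finset.decidableMem i A with hi | hi
    · have : ∀ q ∈ S, (if q.1 = i then g q else 0) = 0 := by
        intro q hq
        have : q.1 ≠ i := fun h => hi (h ▸ Finset.mem_image_of_mem _ hq)
        simp [this]
      rw [key_row, Finset.sum_eq_zero this]
    · have h1 := congrFun (congrArg Prod.fst hxker) ⟨i, hi⟩
      rw [key_row, ← Finset.sum_attach S (fun q => if q.1 = i then g q else 0)]
      simp only [← hxg]
      simpa [φ] using h1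
  have hcolsum : ∀ j, ∑ i, g (i, j) = 0 := by
    have haux : ∀ j, j ≠ p₀.2 → ∑ i, g (i, j) = 0 := by
      intro j hj
      rcases Finset.decidableMem j B with hjB | hjB
      · have : ∀ q ∈ S, (if q.2 = j then g q else 0) = 0 := by
          intro q hq
          have : q.2 ≠ j := fun h => hjB (h ▸ Finset.mem_image_of_mem _ hq)
          simp [this]
        rw [key_col, Finset.sum_eq_zero this]
      · have hjB' : j ∈ B' := Finset.mem_erase.mpr ⟨hj, hjB⟩
        have h1 := congrFun (congrArg Prod.snd hxker) ⟨j, hjB'⟩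
        rw [key_col, ← Finset.sum_attach S (fun q => if q.2 = j then g q else 0)]
        simp only [← hxg]
        simpa [φ] using h1
    have htotal : ∑ j, ∑ i, g (i, j) = 0 := by
      rw [Finset.sum_comm]
      exact Finset.sum_eq_zero fun i _ => hrowsum i
    intro j
    by_cases hj : j = p₀.2
    · subst hj
      have hs := Finset.sum_eq_single (M := ℝ) (f := fun b => ∑ i, g (i, b)) p₀.2
        (fun b _ hb => haux b hb) (fun h => absurd (Finset.mem_univ _) h)
      rw [← hs]
      exact htotal
    · exact haux j hj
  refine ⟨Matrix.of (fun i j => g (i, j)), ?_, ?_, fun i => hrowsum i, fun j => hcolsum j⟩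
  · intro hD
    apply hx0
    funext p
    have := congrFun (congrFun hD p.1.1) p.1.2
    simpa [hxg p] using this
  · intro i j hij
    simp [hg, hij]

/-- **Extreme points of the uniform transportation polytope are balanced partition
matrices.**  If `k ∣ n` and `w = (1/n)𝟙ₙ`, `v = (1/k)𝟙ₖ`, then every extreme point
`X` of `Π(w, v)` has all entries in `{0, 1/n}`; equivalently, `nX` is a `0/1` matrix
with exactly one `1` per row and each column summing to `n/k`, i.e. up to the factor
`1/n` every extreme point is a partition matrix whose clusters all have cardinality
`n/k`. -/
theorem extremePoint_uniform_is_balanced_partition {n k : ℕ}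
    (hn : 0 < n) (hk : 0 < k) (hkn : k ∣ n)
    (X : Matrix (Fin n) (Fin k) ℝ)
    (hX : X ∈ Set.extremePoints ℝ
      (transportPolytope (fun _ : Fin n => (1 : ℝ) / n) (fun _ : Fin k => (1 : ℝ) / k))) :
    (∀ i j, X i j = 0 ∨ X i j = 1 / n) ∧
      (∀ i, ∃! j, X i j = 1 / n) ∧
      (∀ j, (Finset.univ.filter (fun i => X i j ≠ 0)).card = n / k) := by
  classical
  obtain ⟨hXmem, hXext⟩ := hX
  obtain ⟨h0, hr, hc⟩ := hXmem
  obtain ⟨d, hd⟩ := hkn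
  have hn' : (0:ℝ) < n := by exact_mod_cast hn
  have hk' : (0:ℝ) < k := by exact_mod_cast hk
  have hdpos : 0 < d := by
    rcases Nat.eq_zero_or_pos d with h | h
    · subst h; simp at hd; omega
    · exact h
  have hd' : (n:ℝ) = k * d := by exact_mod_cast hd
  have hkd : (1:ℝ)/k = d/n := by
    rw [hd']
    have : (0:ℝ) < d := by exact_mod_cast hdpos
    field_simp
  have hub : ∀ i j, X i j ≤ 1/n := by
    intro i j
    have h1 := Finset.single_le_sum (f := fun j' => X i j') (fun j' _ => h0 i j')
      (Finset.mem_univ j)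
    rw [hr i] at h1
    exact h1
  set S : Finset (Fin n × Fin k) :=
    Finset.univ.filter (fun p => 0 < X p.1 p.2 ∧ X p.1 p.2 < 1/n) with hSdef
  have hmemS : ∀ p : Fin n × Fin k, p ∈ S ↔ (0 < X p.1 p.2 ∧ X p.1 p.2 < 1/n) := by
    intro p; simp [hSdef]
  -- the fractional support is empty
  have hSempty : S = ∅ := by
    by_contra hne
    have hS : S.Nonempty := Finset.nonempty_iff_ne_empty.mpr hne
    have hrow : ∀ p ∈ S, ∃ j' ≠ p.2, (p.1, j') ∈ S := by
      intro p hp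
      obtain ⟨hpos, hlt⟩ := (hmemS p).mp hp
      have hex : ∃ j' ≠ p.2, 0 < X p.1 j' := by
        by_contra h
        push_neg at h
        have hsum : ∑ j', X p.1 j' = X p.1 p.2 :=
          Finset.sum_eq_single p.2
            (fun b _ hb => le_antisymm (h b hb) (h0 p.1 b))
            (fun h' => absurd (Finset.mem_univ _) h')
        rw [hr p.1] at hsum
        linarith
      obtain ⟨j', hj', hj'pos⟩ := hex
      refine ⟨j', hj', (hmemS _).mpr ⟨hj'pos, ?_⟩⟩
      have hpair : X p.1 p.2 + X p.1 j' ≤ ∑ j'', X p.1 j'' := by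
        have hsub := Finset.sum_le_sum_of_subset_of_nonneg
          (Finset.subset_univ ({p.2, j'} : Finset (Fin k)))
          (fun t _ _ => h0 p.1 t)
        rwa [Finset.sum_pair (Ne.symm hj')] at hsub
      rw [hr p.1] at hpair
      linarith
    have hcol : ∀ p ∈ S, ∃ i' ≠ p.1, (i', p.2) ∈ S := by
      intro p hp
      obtain ⟨hpos, hlt⟩ := (hmemS p).mp hp
      by_contra h
      push_neg at h
      have hbin : ∀ i', i' ≠ p.1 → X i' p.2 = 0 ∨ X i' p.2 = 1/n := by
        intro i' hi'
        have hmem := h i' hi'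
        rw [hmemS] at hmem
        push_neg at hmem
        rcases eq_or_lt_of_le (h0 i' p.2) with he | hpos'
        · exact Or.inl he.symm
        · exact Or.inr (le_antisymm (hub i' p.2) (hmem hpos'))
      set T : Finset (Fin n) :=
        (Finset.univ.erase p.1).filter (fun i' => X i' p.2 = 1/n) with hTdef
      have hsum : ∑ i', X i' p.2 = X p.1 p.2 + (T.card : ℝ) * (1/n) := by
        rw [← Finset.add_sum_erase _ _ (Finset.mem_univ p.1)]
        congr 1
        rw [← Finset.sum_filter_add_sum_filter_not (Finset.univ.erase p.1)
          (fun i' => X i' p.2 = 1/n)]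
        have h1 : ∑ i' ∈ T, X i' p.2 = (T.card : ℝ) * (1/n) := by
          rw [Finset.sum_congr rfl (fun i' hi' => (Finset.mem_filter.mp hi').2),
            Finset.sum_const, nsmul_eq_mul]
        have h2 : ∑ i' ∈ (Finset.univ.erase p.1).filter (fun i' => ¬ X i' p.2 = 1/n),
            X i' p.2 = 0 := by
          refine Finset.sum_eq_zero fun i' hi' => ?_
          obtain ⟨hi'e, hi'ne⟩ := Finset.mem_filter.mp hi'
          rcases hbin i' (Finset.mem_erase.mp hi'e).1 with h' | h'
          · exact h'
          · exact absurd h' hi'ne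
        rw [h2, h1]
        ring
      rw [hc p.2] at hsum
      have hsum2 : (d:ℝ)/n = X p.1 p.2 + (T.card : ℝ) * (1/n) := by
        rw [← hkd]; exact hsum
      have hXeq : X p.1 p.2 = ((d:ℝ) - T.card)/n := by
        rw [sub_div]
        have h1 : (d:ℝ)/n = X p.1 p.2 + (T.card:ℝ)/n := by
          rw [hsum2]; ring
        linarith
      rw [hXeq] at hpos hlt
      have h1 : (T.card : ℝ) < d := by
        have := (div_pos_iff.mp hpos)
        rcases this with ⟨h', _⟩ | ⟨_, h'⟩
        · linarith
        · linarith
      have h2 : (d:ℝ) < T.card + 1 := by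
        rw [div_lt_div_iff₀ hn' hn'] at hlt
        nlinarith
      have h1' : T.card < d := by exact_mod_cast h1
      have h2' : d < T.card + 1 := by exact_mod_cast h2
      omega
    obtain ⟨D, hD0, hDsupp, hDrow, hDcol⟩ := exists_nonzero_zero_sums S hS hrow hcol
    set ε : ℝ := S.inf' hS (fun p => X p.1 p.2 / (|D p.1 p.2| + 1)) with hε
    have hεpos : 0 < ε := by
      rw [hε, Finset.lt_inf'_iff]
      intro p hp
      exact div_pos ((hmemS p).mp hp).1 (by positivity)
    have hkey : ∀ i j, ε * |D i j| ≤ X i j := by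
      intro i j
      by_cases hij : (i, j) ∈ S
      · have h1 : ε ≤ X i j / (|D i j| + 1) := Finset.inf'_le _ hij
        have h3 : ε * (|D i j| + 1) ≤ X i j :=
          (le_div_iff₀ (by positivity)).mp h1
        nlinarith
      · rw [hDsupp i j hij]
        simpa using h0 i j
    have habs : ∀ i j, -(ε * |D i j|) ≤ ε * D i j ∧ ε * D i j ≤ ε * |D i j| := by
      intro i j
      constructor
      · nlinarith [neg_abs_le (D i j), hεpos.le]
      · nlinarith [le_abs_self (D i j), hεpos.le]
    have hY₁ : X + ε • D ∈ transportPolytope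
        (fun _ : Fin n => (1 : ℝ) / n) (fun _ : Fin k => (1 : ℝ) / k) := by
      refine ⟨fun i j => ?_, fun i => ?_, fun j => ?_⟩
      · simp only [Matrix.add_apply, Matrix.smul_apply, smul_eq_mul]
        have := (habs i j).1
        have := hkey i j
        linarith
      · simp only [Matrix.add_apply, Matrix.smul_apply, smul_eq_mul]
        rw [Finset.sum_add_distrib, ← Finset.mul_sum, hDrow i, hr i, mul_zero, add_zero]
      · simp only [Matrix.add_apply, Matrix.smul_apply, smul_eq_mul]
        rw [Finset.sum_add_distrib, ← Finset.mul_sum, hDcol j, hc j, mul_zero, add_zero]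
    have hY₂ : X - ε • D ∈ transportPolytope
        (fun _ : Fin n => (1 : ℝ) / n) (fun _ : Fin k => (1 : ℝ) / k) := by
      refine ⟨fun i j => ?_, fun i => ?_, fun j => ?_⟩
      · simp only [Matrix.sub_apply, Matrix.smul_apply, smul_eq_mul]
        have := (habs i j).2
        have := hkey i j
        linarith
      · simp only [Matrix.sub_apply, Matrix.smul_apply, smul_eq_mul]
        rw [Finset.sum_sub_distrib, ← Finset.mul_sum, hDrow i, hr i, mul_zero, sub_zero]
      · simp only [Matrix.sub_apply, Matrix.smul_apply, smul_eq_mul]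
        rw [Finset.sum_sub_distrib, ← Finset.mul_sum, hDcol j, hc j, mul_zero, sub_zero]
    have hseg : X ∈ openSegment ℝ (X + ε • D) (X - ε • D) := by
      refine ⟨1/2, 1/2, by norm_num, by norm_num, by norm_num, ?_⟩
      module
    have heq := (hXext hY₁ hY₂ hseg)
    apply hD0
    have hεD : ε • D = 0 := by
      have := heq
      rwa [add_eq_left] at this
    rcases smul_eq_zero.mp hεD with h | h
    · exact absurd h (ne_of_gt hεpos)
    · exact h
  -- dichotomy for entries
  have hdich : ∀ i j, X i j = 0 ∨ X i j = 1/n := by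
    intro i j
    have hns : ((i, j) : Fin n × Fin k) ∉ S := by rw [hSempty]; exact Finset.notMem_empty _
    rw [hmemS] at hns
    push_neg at hns
    rcases eq_or_lt_of_le (h0 i j) with he | hpos'
    · exact Or.inl he.symm
    · exact Or.inr (le_antisymm (hub i j) (hns hpos'))
  refine ⟨hdich, ?_, ?_⟩
  · -- exactly one entry 1/n per row
    intro i
    have hex : ∃ j, X i j = 1/n := by
      by_contra h
      push_neg at h
      have hz : ∀ j, X i j = 0 := fun j => (hdich i j).resolve_right (h j)
      have hrr := hr i
      rw [Finset.sum_eq_zero (fun j _ => hz j)] at hrr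
      exact absurd hrr.symm (one_div_ne_zero (ne_of_gt hn'))
    obtain ⟨j, hj⟩ := hex
    refine ⟨j, hj, fun j' hj' => ?_⟩
    by_contra hne
    have hpair : X i j' + X i j ≤ ∑ j'', X i j'' := by
      have hsub := Finset.sum_le_sum_of_subset_of_nonneg
        (Finset.subset_univ ({j', j} : Finset (Fin k)))
        (fun t _ _ => h0 i t)
      rwa [Finset.sum_pair hne] at hsub
    rw [hr i, hj, hj'] at hpair
    have : (0:ℝ) < 1/n := by positivity
    linarith
  · -- columns have exactly n/k nonzero entries
    intro j
    have hfe : Finset.univ.filter (fun i => X i j ≠ 0)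
        = Finset.univ.filter (fun i => X i j = 1/n) := by
      apply Finset.filter_congr
      intro i _
      constructor
      · intro h'; exact (hdich i j).resolve_left h'
      · intro h'; rw [h']; positivity
    have hcards : ∑ i, X i j
        = ((Finset.univ.filter (fun i => X i j = 1/n)).card : ℝ) * (1/n) := by
      rw [← Finset.sum_filter_add_sum_filter_not Finset.univ (fun i => X i j = 1/n)]
      have h1 : ∑ i ∈ Finset.univ.filter (fun i => X i j = 1/n), X i j
          = ((Finset.univ.filter (fun i => X i j = 1/n)).card : ℝ) * (1/n) := by
        rw [Finset.sum_congr rfl (fun i hi => (Finset.mem_filter.mp hi).2)]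
        simp [mul_comm]
      have h2 : ∑ i ∈ Finset.univ.filter (fun i => ¬ X i j = 1/n), X i j = 0 := by
        refine Finset.sum_eq_zero fun i hi => ?_
        exact (hdich i j).resolve_right (Finset.mem_filter.mp hi).2
      rw [h1, h2]
      ring
    rw [hc j, hkd] at hcards
    have hcard' : ((Finset.univ.filter (fun i => X i j = 1/n)).card : ℝ) = d := by
      have h3 : (d:ℝ) * (1/n) = ((Finset.univ.filter (fun i => X i j = 1/n)).card : ℝ) * (1/n) := by
        rw [← hcards]; ring
      exact (mul_right_cancel₀ (one_div_ne_zero (ne_of_gt hn')) h3).symm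
    have hcard'' : (Finset.univ.filter (fun i => X i j = 1/n)).card = d := by
      exact_mod_cast hcard'
    rw [hfe, hcard'', hd, Nat.mul_div_cancel_left d hk]
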